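/- Let G be a simple 2-edge-connected graph, vw ∈ E(G), and suppose G − vw is 2-edge-connected. Then there exist two cycles C₁ and C₂ in G both containing the edge vw such that vw is the only edge common to C₁ and C₂. -/

import Mathlib

/-- `G` is 2-edge-connected: connected and still connected after deleting any single edge. -/
def TwoEdgeConn {V : Type*} (G : SimpleGraph V) : Prop :=
  G.Connected ∧ ∀ e ∈ G.edgeSet, (G.deleteEdges {e}).Connected

namespace TwoPathsAux

open SimpleGraph Walk

variable {V : Type*} {G : SimpleGraph V}

/-- Along any walk having a vertex in `S`, there is a "last" vertex `x` in `S`: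
the suffix from `x` meets `S` only in `x`. -/
lemma exists_suffix (S : Set V) : ∀ {a b : V} (R : G.Walk a b),
    (∃ y ∈ R.support, y ∈ S) →
    ∃ (x : V) (_ : x ∈ S) (T : G.Walk x b),
      (∀ e ∈ T.edges, e ∈ R.edges) ∧ ∀ y ∈ T.support, y ∈ S → y = x := by
  intro a b R
  induction R with
  | nil =>
    rintro ⟨y, hy, hyS⟩
    simp only [Walk.support_nil, List.mem_singleton] at hy
    subst hy
    refine ⟨y, hyS, Walk.nil, by simp, ?_⟩
    intro z hz _
    simpa using hz
  | @cons a c b h R' ih =>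
    rintro ⟨y, hy, hyS⟩
    by_cases hc : ∃ z ∈ R'.support, z ∈ S
    · obtain ⟨x, hxS, T, hTe, hTS⟩ := ih hc
      refine ⟨x, hxS, T, ?_, hTS⟩
      intro e he
      rw [Walk.edges_cons]
      exact List.mem_cons_of_mem _ (hTe e he)
    · have hyA : y = a := by
        rcases List.mem_cons.mp (by simpa using hy) with h1 | h1
        · exact h1
        · exact absurd ⟨y, h1, hyS⟩ hc
      subst hyA
      refine ⟨y, hyS, Walk.cons h R', fun e he => he, ?_⟩
      intro z hz hzS
      rcases List.mem_cons.mp (by simpa using hz) with h1 | h1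
      · exact h1
      · exact absurd ⟨z, h1, hzS⟩ hc

lemma isPath_append {u x v : V} {p : G.Walk u x} {q : G.Walk x v}
    (hp : p.IsPath) (hq : q.IsPath)
    (hdisj : ∀ y ∈ p.support, y ∈ q.support → y = x) : (p.append q).IsPath := by
  rw [Walk.isPath_def, Walk.support_append]
  have hq' := hq.support_nodup
  rw [Walk.support_eq_cons] at hq'
  refine List.Nodup.append hp.support_nodup hq'.of_cons ?_
  intro y hy hyt
  have hyq : y ∈ q.support := by
    rw [Walk.support_eq_cons]; exact List.mem_cons_of_mem _ hyt
  have hyx := hdisj y hy hyq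
  subst hyx
  exact (List.nodup_cons.mp hq').1 hyt

lemma isPath_concat {u w v : V} {p : G.Walk u w} (hp : p.IsPath) (h : G.Adj w v)
    (hv : v ∉ p.support) : (p.concat h).IsPath := by
  rw [Walk.concat_eq_append]
  refine isPath_append hp ?_ ?_
  · rw [Walk.isPath_def]
    simp [h.ne]
  · intro y hy hy2
    simp only [Walk.support_cons, Walk.support_nil, List.mem_cons,
      List.mem_singleton] at hy2
    rcases hy2 with rfl | hy2
    · rfl
    · rcases hy2 with rfl | h0
      · exact absurd hy hv
      · exact absurd h0 List.not_mem_nil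

lemma end_mem_support_tail {a b : V} (p : G.Walk a b) (hab : a ≠ b) :
    b ∈ p.support.tail := by
  have hb := p.end_mem_support
  rw [Walk.support_eq_cons] at hb
  rcases List.mem_cons.mp hb with h1 | h1
  · exact absurd h1.symm hab
  · exact h1

lemma edge_not_mem_takeUntil [DecidableEq V] {u w v : V} {P : G.Walk u w} (hP : P.IsPath)
    (hv : v ∈ P.support) (hwv : w ≠ v) : s(w, v) ∉ (P.takeUntil v hv).edges := by
  intro he
  have hw1 : w ∈ (P.takeUntil v hv).support := Walk.fst_mem_support_of_mem_edges _ he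
  have hw2 : w ∈ (P.dropUntil v hv).support.tail :=
    end_mem_support_tail _ (Ne.symm hwv)
  have hnd := hP.support_nodup
  rw [← Walk.take_spec P hv, Walk.support_append] at hnd
  exact (List.nodup_append'.mp hnd).2.2 hw1 hw2

lemma caseB [DecidableEq V] {u w v : V} (P₁ P₂ : G.Walk u w)
    (hp₁ : P₁.IsPath) (hp₂ : P₂.IsPath) (hd : ∀ e ∈ P₁.edges, e ∉ P₂.edges)
    (hwv : G.Adj w v) (hv1 : v ∈ P₁.support) (hv2 : v ∉ P₂.support) :
    ∃ Q₁ Q₂ : G.Walk u v, Q₁.IsPath ∧ Q₂.IsPath ∧ ∀ e ∈ Q₁.edges, e ∉ Q₂.edges := by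
  refine ⟨P₁.takeUntil v hv1, P₂.concat hwv, hp₁.takeUntil hv1,
    isPath_concat hp₂ hwv hv2, ?_⟩
  intro e he1 he2
  have he1' : e ∈ P₁.edges := Walk.edges_takeUntil_subset _ hv1 he1
  rw [Walk.edges_concat, List.concat_eq_append, List.mem_append,
    List.mem_singleton] at he2
  rcases he2 with h2 | h2
  · exact hd e he1' h2
  · subst h2
    exact edge_not_mem_takeUntil hp₁ hv1 hwv.ne he1

lemma caseC [DecidableEq V] {u w v x : V} (P₁ P₂ : G.Walk u w)
    (hp₁ : P₁.IsPath) (hp₂ : P₂.IsPath) (hd : ∀ e ∈ P₁.edges, e ∉ P₂.edges)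
    (hwv : G.Adj w v) (hv1 : v ∉ P₁.support) (hv2 : v ∉ P₂.support)
    (hx : x ∈ P₁.support) (T : G.Walk x v)
    (hTwv : s(w, v) ∉ T.edges)
    (hTS : ∀ y ∈ T.support, (y ∈ P₁.support ∨ y ∈ P₂.support) → y = x) :
    ∃ Q₁ Q₂ : G.Walk u v, Q₁.IsPath ∧ Q₂.IsPath ∧ ∀ e ∈ Q₁.edges, e ∉ Q₂.edges := by
  refine ⟨(P₁.takeUntil x hx).append T.bypass, P₂.concat hwv, ?_,
    isPath_concat hp₂ hwv hv2, ?_⟩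
  · refine isPath_append (hp₁.takeUntil hx) T.bypass_isPath ?_
    intro y hy hy2
    exact hTS y (T.support_bypass_subset hy2)
      (Or.inl (Walk.support_takeUntil_subset _ hx hy))
  · intro e he1 he2
    rw [Walk.edges_append, List.mem_append] at he1
    rw [Walk.edges_concat, List.concat_eq_append, List.mem_append,
      List.mem_singleton] at he2
    rcases he1 with h1 | h1
    · have h1' : e ∈ P₁.edges := Walk.edges_takeUntil_subset _ hx h1
      rcases he2 with h2 | h2
      · exact hd e h1' h2
      · subst h2
        exact hv1 (Walk.snd_mem_support_of_mem_edges _ h1')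
    · have h1' : e ∈ T.edges := T.edges_bypass_subset h1
      rcases he2 with h2 | h2
      · obtain ⟨c, d, rfl⟩ : ∃ c d, e = s(c, d) := by
          induction e using Sym2.ind with
          | _ c d => exact ⟨c, d, rfl⟩
        have hc : c = x := hTS c (Walk.fst_mem_support_of_mem_edges _ h1')
          (Or.inr (Walk.fst_mem_support_of_mem_edges _ h2))
        have hd' : d = x := hTS d (Walk.snd_mem_support_of_mem_edges _ h1')
          (Or.inr (Walk.snd_mem_support_of_mem_edges _ h2))
        have hadj : G.Adj c d := P₂.edges_subset_edgeSet h2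
        exact hadj.ne (hc.trans hd'.symm)
      · subst h2
        exact hTwv h1'

lemma combine [DecidableEq V] {u w v : V} (P₁ P₂ : G.Walk u w)
    (hp₁ : P₁.IsPath) (hp₂ : P₂.IsPath) (hd : ∀ e ∈ P₁.edges, e ∉ P₂.edges)
    (hwv : G.Adj w v) (R : G.Walk u v) (hR : s(w, v) ∉ R.edges) :
    ∃ Q₁ Q₂ : G.Walk u v, Q₁.IsPath ∧ Q₂.IsPath ∧ ∀ e ∈ Q₁.edges, e ∉ Q₂.edges := by
  have hd' : ∀ e ∈ P₂.edges, e ∉ P₁.edges := fun e h2 h1 => hd e h1 h2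
  by_cases hv1 : v ∈ P₁.support
  · by_cases hv2 : v ∈ P₂.support
    · exact ⟨P₁.takeUntil v hv1, P₂.takeUntil v hv2, hp₁.takeUntil hv1, hp₂.takeUntil hv2,
        fun e h1 h2 => hd e (Walk.edges_takeUntil_subset _ hv1 h1)
          (Walk.edges_takeUntil_subset _ hv2 h2)⟩
    · exact caseB P₁ P₂ hp₁ hp₂ hd hwv hv1 hv2
  · by_cases hv2 : v ∈ P₂.support
    · obtain ⟨Q₁, Q₂, h1, h2, h3⟩ := caseB P₂ P₁ hp₂ hp₁ hd' hwv hv2 hv1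
      exact ⟨Q₂, Q₁, h2, h1, fun e he2 he1 => h3 e he1 he2⟩
    · obtain ⟨x, hxS, T, hTe, hTS⟩ :=
        exists_suffix (G := G) {y | y ∈ P₁.support ∨ y ∈ P₂.support} R
          ⟨u, R.start_mem_support, Or.inl P₁.start_mem_support⟩
      have hTwv : s(w, v) ∉ T.edges := fun h => hR (hTe _ h)
      rcases hxS with hx | hx
      · exact caseC P₁ P₂ hp₁ hp₂ hd hwv hv1 hv2 hx T hTwv hTS
      · obtain ⟨Q₁, Q₂, h1, h2, h3⟩ := caseC P₂ P₁ hp₂ hp₁ hd' hwv hv2 hv1 hx T hTwv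
          (fun y hy h => hTS y hy h.symm)
        exact ⟨Q₂, Q₁, h2, h1, fun e he2 he1 => h3 e he1 he2⟩

lemma two_paths [DecidableEq V] (hG : TwoEdgeConn G) :
    ∀ (n : ℕ) (u v : V), G.dist u v ≤ n →
      ∃ p q : G.Walk u v, p.IsPath ∧ q.IsPath ∧ ∀ e ∈ p.edges, e ∉ q.edges := by
  intro n
  induction n with
  | zero =>
    intro u v h
    have huv : u = v := hG.1.dist_eq_zero_iff.mp (Nat.le_zero.mp h)
    subst huv
    exact ⟨Walk.nil, Walk.nil, Walk.IsPath.nil, Walk.IsPath.nil, by simp⟩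
  | succ n ih =>
    intro u v h
    by_cases hle : G.dist u v ≤ n
    · exact ih u v hle
    have hdist : G.dist u v = n + 1 :=
      le_antisymm h (Nat.succ_le_of_lt (lt_of_not_ge hle))
    obtain ⟨r, hr⟩ := (hG.1.preconnected u v).exists_walk_length_eq_dist
    have hnnil : ¬ r.reverse.Nil := by
      rw [Walk.nil_iff_length_eq, Walk.length_reverse, hr, hdist]
      simp
    obtain ⟨w, hadj, t, ht⟩ := Walk.not_nil_iff.mp hnnil
    have hlen : t.length = n := by
      have hc := congrArg Walk.length ht
      rw [Walk.length_reverse, hr, hdist, Walk.length_cons] at hc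
      omega
    have hw : G.dist u w ≤ n := by
      have hdl := G.dist_le t.reverse
      rwa [Walk.length_reverse, hlen] at hdl
    obtain ⟨P₁, P₂, hp₁, hp₂, hdisj⟩ := ih u w hw
    have hwv : G.Adj w v := hadj.symm
    have hcon := hG.2 s(w, v) (G.mem_edgeSet.mpr hwv)
    obtain ⟨R₀⟩ := hcon.preconnected u v
    have hsub : ∀ e ∈ R₀.edges, e ∈ G.edgeSet := by
      intro e he
      have h' := R₀.edges_subset_edgeSet he
      rw [SimpleGraph.edgeSet_deleteEdges] at h'
      exact h'.1
    have hRmem : s(w, v) ∉ (R₀.transfer G hsub).edges := by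
      rw [Walk.edges_transfer]
      intro hmem
      have h' := R₀.edges_subset_edgeSet hmem
      rw [SimpleGraph.edgeSet_deleteEdges] at h'
      exact h'.2 rfl
    exact combine P₁ P₂ hp₁ hp₂ hdisj hwv (R₀.transfer G hsub) hRmem

end TwoPathsAux

theorem stmt_12 {V : Type*} (G : SimpleGraph V) (v w : V) (hvw : G.Adj v w)
    (h1 : TwoEdgeConn G) (h2 : TwoEdgeConn (G.deleteEdges {s(v, w)})) :
    ∃ (c₁ c₂ : G.Walk v v), c₁.IsCycle ∧ c₂.IsCycle ∧
      s(v, w) ∈ c₁.edges ∧ s(v, w) ∈ c₂.edges ∧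
      ∀ e, e ∈ c₁.edges → e ∈ c₂.edges → e = s(v, w) := by
  classical
  set G' := G.deleteEdges {s(v, w)} with hG'
  obtain ⟨p, q, hp, hq, hdisj⟩ := TwoPathsAux.two_paths h2 (G'.dist w v) w v le_rfl
  have key : ∀ e ∈ G'.edgeSet, e ∈ G.edgeSet ∧ e ≠ s(v, w) := by
    intro e he
    rw [hG', SimpleGraph.edgeSet_deleteEdges] at he
    exact ⟨he.1, fun h => he.2 h⟩
  have hsubp : ∀ e ∈ p.edges, e ∈ G.edgeSet :=
    fun e he => (key e (p.edges_subset_edgeSet he)).1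
  have hsubq : ∀ e ∈ q.edges, e ∈ G.edgeSet :=
    fun e he => (key e (q.edges_subset_edgeSet he)).1
  set p' := p.transfer G hsubp with hp'def
  set q' := q.transfer G hsubq with hq'def
  have hpe : p'.edges = p.edges := p.edges_transfer hsubp
  have hqe : q'.edges = q.edges := q.edges_transfer hsubq
  have hnp : s(v, w) ∉ p'.edges := by
    rw [hpe]
    exact fun h => (key _ (p.edges_subset_edgeSet h)).2 rfl
  have hnq : s(v, w) ∉ q'.edges := by
    rw [hqe]
    exact fun h => (key _ (q.edges_subset_edgeSet h)).2 rfl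
  refine ⟨SimpleGraph.Walk.cons hvw p', SimpleGraph.Walk.cons hvw q', ?_, ?_, ?_, ?_, ?_⟩
  · rw [SimpleGraph.Walk.cons_isCycle_iff]
    exact ⟨hp.transfer hsubp, hnp⟩
  · rw [SimpleGraph.Walk.cons_isCycle_iff]
    exact ⟨hq.transfer hsubq, hnq⟩
  · rw [SimpleGraph.Walk.edges_cons]
    exact List.mem_cons_self
  · rw [SimpleGraph.Walk.edges_cons]
    exact List.mem_cons_self
  · intro e he1 he2
    rw [SimpleGraph.Walk.edges_cons, List.mem_cons] at he1 he2
    rcases he1 with rfl | he1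
    · rfl
    rcases he2 with rfl | he2
    · rfl
    exact absurd (hqe ▸ he2) (hdisj e (hpe ▸ he1))
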